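/- Let n ≥ 13 and let i be an integer with 0 ≤ i ≤ n−1. In the graph P(n,3), d(u_0, e_i^v) = min(i+1, n−i+1) if i ≤ 1 or i = n−1, and d(u_0, e_i^v) = min(q_i + r_i + 1, q_n − q_i + r) otherwise. -/

import Mathlib

open SimpleGraph

/-- The vertex set of the generalized Petersen graph: two disjoint copies of `ZMod n`. -/
abbrev GPVert (n : ℕ) := ZMod n ⊕ ZMod n

/-- The outer vertices `u_j`. -/
def pu {n : ℕ} (j : ZMod n) : GPVert n := Sum.inl j

/-- The inner vertices `v_j`. -/
def pv {n : ℕ} (j : ZMod n) : GPVert n := Sum.inr j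

/-- The generalized Petersen graph `P(n,k)`, with edges
`u_j u_{j+1}`, `v_j v_{j+k}`, and `u_j v_j` for all `j`. -/
def GP (n k : ℕ) : SimpleGraph (GPVert n) :=
  SimpleGraph.fromRel fun a b =>
    (∃ j : ZMod n, a = pu j ∧ b = pu (j + 1)) ∨
    (∃ j : ZMod n, a = pv j ∧ b = pv (j + (k : ZMod n))) ∨
    (∃ j : ZMod n, a = pu j ∧ b = pv j)

/-- The distance from a vertex to an (unordered) edge:
`d(x, yz) = min (d x y) (d x z)`. -/
noncomputable def edist {V : Type*} (G : SimpleGraph V) (x : V) (e : Sym2 V) : ℕ :=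
  Sym2.lift ⟨fun a b => min (G.dist x a) (G.dist x b), fun a b => min_comm (G.dist x a) (G.dist x b)⟩ e

/-- `S` is an edge resolving set of `G` if any two distinct edges of `G`
are distinguished by their distance to some vertex of `S`. -/
def IsEdgeResolving {V : Type*} (G : SimpleGraph V) (S : Set V) : Prop :=
  ∀ e ∈ G.edgeSet, ∀ e' ∈ G.edgeSet, e ≠ e' → ∃ x ∈ S, edist G x e ≠ edist G x e'

/-- `q_m`: the quotient of `m` upon division by 3. -/
def q3 (m : ℕ) : ℤ := (m : ℤ) / 3

/-- `r_m`: the residue of `m` modulo 3. -/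
def r3 (m : ℕ) : ℤ := (m : ℤ) % 3

/-- The parameter `r = |r_n − r_i|`, except that `r = 0` when `(r_n, r_i) = (0, 2)`. -/
def rr (n i : ℕ) : ℤ := if n % 3 = 0 ∧ i % 3 = 2 then 0 else |r3 n - r3 i|

namespace GPAux

variable {n : ℕ}

lemma adj_uu (hn : 13 ≤ n) (j : ZMod n) : (GP n 3).Adj (pu j) (pu (j + 1)) := by
  rw [GP, SimpleGraph.fromRel_adj]
  refine ⟨?_, Or.inl (Or.inl ⟨j, rfl, rfl⟩)⟩
  simp only [pu, ne_eq, Sum.inl.injEq, left_eq_add]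
  intro h
  have h1 : ((1 : ℕ) : ZMod n) = 0 := by exact_mod_cast h
  rw [ZMod.natCast_eq_zero_iff] at h1
  have := Nat.le_of_dvd one_pos h1
  omega

lemma adj_vv (hn : 13 ≤ n) (j : ZMod n) : (GP n 3).Adj (pv j) (pv (j + ((3:ℕ) : ZMod n))) := by
  rw [GP, SimpleGraph.fromRel_adj]
  refine ⟨?_, Or.inl (Or.inr (Or.inl ⟨j, rfl, rfl⟩))⟩
  simp only [pv, ne_eq, Sum.inr.injEq, left_eq_add]
  intro h
  rw [ZMod.natCast_eq_zero_iff] at h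
  have := Nat.le_of_dvd (by norm_num) h
  omega

lemma adj_uv (j : ZMod n) : (GP n 3).Adj (pu j) (pv j) := by
  rw [GP, SimpleGraph.fromRel_adj]
  exact ⟨by simp [pu, pv], Or.inl (Or.inr (Or.inr ⟨j, rfl, rfl⟩))⟩

lemma walk_pu_add (hn : 13 ≤ n) (a : ZMod n) (k : ℕ) :
    ∃ p : (GP n 3).Walk (pu a) (pu (a + (k : ZMod n))), p.length = k := by
  induction k with
  | zero => exact ⟨(Walk.nil).copy rfl (by simp), by simp⟩
  | succ k ih =>
    obtain ⟨p, hp⟩ := ih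
    refine ⟨(p.concat (adj_uu hn (a + (k : ZMod n)))).copy rfl (by push_cast; ring), ?_⟩
    simp [Walk.length_concat, hp]

lemma walk_pu_sub (hn : 13 ≤ n) (a : ZMod n) (k : ℕ) :
    ∃ p : (GP n 3).Walk (pu a) (pu (a - (k : ZMod n))), p.length = k := by
  obtain ⟨p, hp⟩ := walk_pu_add hn (a - (k : ZMod n)) k
  exact ⟨(p.copy rfl (by ring_nf)).reverse, by simpa using hp⟩

lemma walk_pv_add (hn : 13 ≤ n) (a : ZMod n) (k : ℕ) :
    ∃ p : (GP n 3).Walk (pv a) (pv (a + ((3 * k : ℕ) : ZMod n))), p.length = k := by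
  induction k with
  | zero => exact ⟨(Walk.nil).copy rfl (by simp), by simp⟩
  | succ k ih =>
    obtain ⟨p, hp⟩ := ih
    refine ⟨(p.concat (adj_vv hn (a + ((3 * k : ℕ) : ZMod n)))).copy rfl (by push_cast; ring), ?_⟩
    simp [Walk.length_concat, hp]

lemma walk_pv_sub (hn : 13 ≤ n) (a : ZMod n) (k : ℕ) :
    ∃ p : (GP n 3).Walk (pv a) (pv (a - ((3 * k : ℕ) : ZMod n))), p.length = k := by
  obtain ⟨p, hp⟩ := walk_pv_add hn (a - ((3 * k : ℕ) : ZMod n)) k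
  exact ⟨(p.copy rfl (by ring_nf)).reverse, by simpa using hp⟩

lemma walk_pu_int (hn : 13 ≤ n) (a : ZMod n) (t : ℤ) :
    ∃ p : (GP n 3).Walk (pu a) (pu (a + ((t : ℤ) : ZMod n))), p.length = t.natAbs := by
  rcases Int.eq_nat_or_neg t with ⟨m, rfl | rfl⟩
  · obtain ⟨p, hp⟩ := walk_pu_add hn a m
    exact ⟨p.copy rfl (by push_cast; ring), by simpa using hp⟩
  · obtain ⟨p, hp⟩ := walk_pu_sub hn a m
    exact ⟨p.copy rfl (by push_cast; ring), by simpa using hp⟩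

lemma walk_pv_int (hn : 13 ≤ n) (a : ZMod n) (w : ℤ) :
    ∃ p : (GP n 3).Walk (pv a) (pv (a + ((3 * w : ℤ) : ZMod n))), p.length = w.natAbs := by
  rcases Int.eq_nat_or_neg w with ⟨m, rfl | rfl⟩
  · obtain ⟨p, hp⟩ := walk_pv_add hn a m
    exact ⟨p.copy rfl (by push_cast; ring), by simpa using hp⟩
  · obtain ⟨p, hp⟩ := walk_pv_sub hn a m
    exact ⟨p.copy rfl (by push_cast; ring), by simpa using hp⟩

lemma walk_to (hn : 13 ≤ n) (t w : ℤ) :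
    ∃ p : (GP n 3).Walk (pu 0) (pv (((t + 3 * w : ℤ)) : ZMod n)),
      p.length = t.natAbs + w.natAbs + 1 := by
  obtain ⟨p1, h1⟩ := walk_pu_int hn 0 t
  obtain ⟨p2, h2⟩ := walk_pv_int hn ((0 : ZMod n) + ((t : ℤ) : ZMod n)) w
  refine ⟨p1.append (Walk.cons (adj_uv _) (p2.copy rfl (by push_cast; ring))), ?_⟩
  simp [Walk.length_append, h1, h2]
  omega

lemma reach (hn : 13 ≤ n) (j : ZMod n) : (GP n 3).Reachable (pu 0) (pv j) := by
  haveI : NeZero n := ⟨by omega⟩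
  obtain ⟨p, -⟩ := walk_to hn (j.val : ℤ) 0
  exact ⟨p.copy rfl (by push_cast; simp [ZMod.natCast_zmod_val])⟩

/-- index of a vertex -/
def idx : GPVert n → ZMod n := Sum.elim id id

/-- 1 for inner vertices -/
def spk : GPVert n → ℕ := Sum.elim (fun _ => 0) (fun _ => 1)

lemma walk_bound (hn : 13 ≤ n) :
    ∀ (x : GPVert n) (p : (GP n 3).Walk x (pu 0)),
      ∃ t w : ℤ, ((t + 3 * w : ℤ) : ZMod n) = idx x ∧
        t.natAbs + w.natAbs + spk x ≤ p.length := by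
  suffices h : ∀ (x y : GPVert n) (p : (GP n 3).Walk x y), y = pu 0 →
      ∃ t w : ℤ, ((t + 3 * w : ℤ) : ZMod n) = idx x ∧
        t.natAbs + w.natAbs + spk x ≤ p.length by
    intro x p; exact h x _ p rfl
  intro x y p
  induction p with
  | nil => rintro rfl; exact ⟨0, 0, by simp [idx, pu], by simp [spk, pu]⟩
  | @cons x y _ h q ih =>
    rintro rfl
    obtain ⟨t, w, hc, hl⟩ := ih rfl
    rw [GP, SimpleGraph.fromRel_adj] at h
    obtain ⟨-, (⟨j, rfl, rfl⟩ | ⟨j, rfl, rfl⟩ | ⟨j, rfl, rfl⟩) |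
              (⟨j, rfl, rfl⟩ | ⟨j, rfl, rfl⟩ | ⟨j, rfl, rfl⟩)⟩ := h
  -- x = pu j, y = pu (j+1)
    · refine ⟨t - 1, w, ?_, ?_⟩
      · simp only [idx, pu, Sum.elim_inl, id] at hc ⊢
        push_cast at hc ⊢
        linear_combination hc
      · rw [Walk.length_cons]
        simp only [spk, pu, Sum.elim_inl, Walk.length_cons] at hl ⊢
        omega
  -- x = pv j, y = pv (j+3)
    · refine ⟨t, w - 1, ?_, ?_⟩
      · simp only [idx, pv, Sum.elim_inr, id] at hc ⊢
        push_cast at hc ⊢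
        linear_combination hc
      · rw [Walk.length_cons]
        simp only [spk, pv, Sum.elim_inr, Walk.length_cons] at hl ⊢
        omega
  -- x = pu j, y = pv j
    · refine ⟨t, w, ?_, ?_⟩
      · simpa [idx, pu, pv] using hc
      · rw [Walk.length_cons]
        simp only [spk, pu, pv, Sum.elim_inl, Sum.elim_inr, Walk.length_cons] at hl ⊢
        omega
  -- y = pu j, x = pu (j+1)
    · refine ⟨t + 1, w, ?_, ?_⟩
      · simp only [idx, pu, Sum.elim_inl, id] at hc ⊢
        push_cast at hc ⊢
        linear_combination hc
      · rw [Walk.length_cons]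
        simp only [spk, pu, Sum.elim_inl, Walk.length_cons] at hl ⊢
        omega
  -- y = pv j, x = pv (j+3)
    · refine ⟨t, w + 1, ?_, ?_⟩
      · simp only [idx, pv, Sum.elim_inr, id] at hc ⊢
        push_cast at hc ⊢
        linear_combination hc
      · rw [Walk.length_cons]
        simp only [spk, pv, Sum.elim_inr, Walk.length_cons] at hl ⊢
        omega
  -- y = pu j, x = pv j
    · refine ⟨t, w, ?_, ?_⟩
      · simpa [idx, pu, pv] using hc
      · rw [Walk.length_cons]
        simp only [spk, pu, pv, Sum.elim_inl, Sum.elim_inr, Walk.length_cons] at hl ⊢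
        omega

lemma dist_lower (hn : 13 ≤ n) (j : ZMod n) :
    ∃ t w : ℤ, ((t + 3 * w : ℤ) : ZMod n) = j ∧
      t.natAbs + w.natAbs + 1 ≤ (GP n 3).dist (pu 0) (pv j) := by
  obtain ⟨p, hp⟩ := (reach hn j).exists_walk_length_eq_dist
  obtain ⟨t, w, hc, hl⟩ := walk_bound hn _ p.reverse
  rw [Walk.length_reverse, hp] at hl
  exact ⟨t, w, by simpa [idx, pv] using hc, by simpa [spk, pv] using hl⟩

lemma dist_upper (hn : 13 ≤ n) (j : ZMod n) (m : ℤ) (hm : ((m : ℤ) : ZMod n) = j) :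
    (GP n 3).dist (pu 0) (pv j) ≤ m.natAbs / 3 + m.natAbs % 3 + 1 := by
  rcases Int.eq_nat_or_neg m with ⟨a, rfl | rfl⟩
  · obtain ⟨p, hp⟩ := walk_to hn ((a % 3 : ℕ) : ℤ) ((a / 3 : ℕ) : ℤ)
    have hv : ((((a % 3 : ℕ) : ℤ) + 3 * ((a / 3 : ℕ) : ℤ) : ℤ) : ZMod n) = j := by
      rw [show (((a % 3 : ℕ) : ℤ) + 3 * ((a / 3 : ℕ) : ℤ) : ℤ) = ((a : ℕ) : ℤ) by push_cast; omega]
      exact hm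
    have := SimpleGraph.dist_le (p.copy rfl (by rw [hv]))
    simp only [Walk.length_copy, hp] at this
    simp only [Int.natAbs_natCast] at this ⊢
    omega
  · obtain ⟨p, hp⟩ := walk_to hn (-((a % 3 : ℕ) : ℤ)) (-((a / 3 : ℕ) : ℤ))
    have hv : (((-((a % 3 : ℕ) : ℤ)) + 3 * (-((a / 3 : ℕ) : ℤ)) : ℤ) : ZMod n) = j := by
      rw [show ((-((a % 3 : ℕ) : ℤ)) + 3 * (-((a / 3 : ℕ) : ℤ)) : ℤ) = -((a : ℕ) : ℤ) by
        push_cast; omega]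
      exact hm
    have := SimpleGraph.dist_le (p.copy rfl (by rw [hv]))
    simp only [Walk.length_copy, hp] at this
    simp only [Int.natAbs_neg, Int.natAbs_natCast] at this ⊢
    omega

lemma cost_cases (hn : 13 ≤ n) (a : ℕ) (ha : a ≤ n + 2) (t w k : ℤ)
    (h : t + 3 * w - a = n * k) (D : ℕ) (hD : t.natAbs + w.natAbs + 1 ≤ D) :
    a / 3 + a % 3 + 1 ≤ D ∨ ((a : ℤ) - n).natAbs / 3 + ((a : ℤ) - n).natAbs % 3 + 1 ≤ D ∨
      (n : ℤ) - 2 ≤ 3 * ((D : ℤ) - 1) := by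
  rcases lt_trichotomy k 0 with hk | rfl | hk
  · rcases eq_or_lt_of_le (show k ≤ -1 by omega) with rfl | hk2
    · right; left
      omega
    · right; right
      have hnk : (n : ℤ) * k ≤ (n : ℤ) * (-2) :=
        mul_le_mul_of_nonneg_left (by omega) (by positivity)
      omega
  · left; omega
  · right; right
    have hnk : (n : ℤ) ≤ (n : ℤ) * k := le_mul_of_one_le_right (by positivity) (by omega)
    omega

set_option maxHeartbeats 3000000 in
lemma final_arith (n i D1 D2 : ℕ) (hn : 13 ≤ n) (hi : i ≤ n - 1)
    (hU1 : D1 ≤ ((i : ℤ)).natAbs / 3 + ((i : ℤ)).natAbs % 3 + 1)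
    (hU1b : D1 ≤ ((i : ℤ) - n).natAbs / 3 + ((i : ℤ) - n).natAbs % 3 + 1)
    (hU2 : D2 ≤ ((i : ℤ) + 3 - n).natAbs / 3 + ((i : ℤ) + 3 - n).natAbs % 3 + 1)
    (hL1 : i / 3 + i % 3 + 1 ≤ D1 ∨ ((i : ℤ) - n).natAbs / 3 + ((i : ℤ) - n).natAbs % 3 + 1 ≤ D1 ∨
      (n : ℤ) - 2 ≤ 3 * ((D1 : ℤ) - 1))
    (hL2 : (i + 3) / 3 + (i + 3) % 3 + 1 ≤ D2 ∨
      (((i + 3 : ℕ) : ℤ) - n).natAbs / 3 + (((i + 3 : ℕ) : ℤ) - n).natAbs % 3 + 1 ≤ D2 ∨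
      (n : ℤ) - 2 ≤ 3 * ((D2 : ℤ) - 1)) :
    ((min D1 D2 : ℕ) : ℤ) =
      if i ≤ 1 ∨ i = n - 1 then
        min ((i : ℤ) + 1) ((n : ℤ) - i + 1)
      else
        min (q3 i + r3 i + 1) (q3 n - q3 i + rr n i) := by
  rw [Nat.cast_min]
  simp only [q3, r3, rr]
  rw [Int.abs_eq_natAbs]
  rcases hL1 with hL1 | hL1 | hL1 <;> rcases hL2 with hL2 | hL2 | hL2 <;>
    split_ifs with h1 h2 <;> omega

end GPAux

open GPAux in
/-- The distance from `u_0` to the inner edge `e_i^v = v_i v_{i+3}` in `P(n,3)`, `n ≥ 13`. -/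
theorem dist_u0_inner_edge (n i : ℕ) (hn : 13 ≤ n) (hi : i ≤ n - 1) :
    (edist (GP n 3) (pu 0) s(pv (i : ZMod n), pv ((i : ZMod n) + 3)) : ℤ) =
      if i ≤ 1 ∨ i = n - 1 then
        min ((i : ℤ) + 1) ((n : ℤ) - i + 1)
      else
        min (q3 i + r3 i + 1) (q3 n - q3 i + rr n i) := by
  haveI : NeZero n := ⟨by omega⟩
  set D1 := (GP n 3).dist (pu 0) (pv (i : ZMod n)) with hD1def
  set D2 := (GP n 3).dist (pu 0) (pv ((i : ZMod n) + 3)) with hD2def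
  have hed : edist (GP n 3) (pu 0) s(pv (i : ZMod n), pv ((i : ZMod n) + 3)) = min D1 D2 := by
    simp only [_root_.edist, Sym2.lift_mk]
    rfl
  -- upper bounds
  have hU1 : D1 ≤ ((i : ℤ)).natAbs / 3 + ((i : ℤ)).natAbs % 3 + 1 :=
    dist_upper hn _ (i : ℤ) (by push_cast; ring)
  have hU1b : D1 ≤ ((i : ℤ) - n).natAbs / 3 + ((i : ℤ) - n).natAbs % 3 + 1 :=
    dist_upper hn _ ((i : ℤ) - n) (by push_cast; simp [ZMod.natCast_self])
  have hU2 : D2 ≤ ((i : ℤ) + 3 - n).natAbs / 3 + ((i : ℤ) + 3 - n).natAbs % 3 + 1 :=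
    dist_upper hn _ ((i : ℤ) + 3 - n) (by push_cast; simp [ZMod.natCast_self])
  -- lower bounds
  obtain ⟨t1, w1, hc1, hl1⟩ := dist_lower hn (i : ZMod n)
  obtain ⟨t2, w2, hc2, hl2⟩ := dist_lower hn ((i : ZMod n) + 3)
  have hk1 : ∃ k : ℤ, t1 + 3 * w1 - i = n * k := by
    have : ((t1 + 3 * w1 - i : ℤ) : ZMod n) = 0 := by
      push_cast at hc1 ⊢; linear_combination hc1
    exact (ZMod.intCast_zmod_eq_zero_iff_dvd _ n).mp this
  have hk2 : ∃ k : ℤ, t2 + 3 * w2 - (i + 3 : ℕ) = n * k := by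
    have : ((t2 + 3 * w2 - (i + 3 : ℕ) : ℤ) : ZMod n) = 0 := by
      push_cast at hc2 ⊢; linear_combination hc2
    exact (ZMod.intCast_zmod_eq_zero_iff_dvd _ n).mp this
  obtain ⟨k1, hk1⟩ := hk1
  obtain ⟨k2, hk2⟩ := hk2
  have hL1 := cost_cases hn i (by omega) t1 w1 k1 hk1 D1 hl1
  have hL2 := cost_cases hn (i + 3) (by omega) t2 w2 k2 hk2 D2 hl2
  rw [hed]
  clear hc1 hc2 hk1 hk2 hD1def hD2def hed
  clear_value D1 D2
  exact final_arith n i D1 D2 hn hi hU1 hU1b hU2 hL1 hL2
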